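/- Let q ∈ (0,1), β < 1, z ∈ ℂ with 0 < |z| < 1, and τ with q·υ(τ) = β·υ(z) where υ(w) = w + w⁻¹. Then the monic orthogonal polynomials p_n^{(q,β)} defined by p_{-1} = 0, p_0 = 1, p_{n+1}(x) = x p_n(x) - γ̃_{n-1}γ̃_n p_{n-1}(x) with γ̃_n = (1 - q^{n+1})/(1 - βq^n), satisfy the explicit formula p_n^{(q,β)}(υ(z)) = ((q;q)_n/(β;q)_n) · ∑_{k=0}^n [(qτz⁻¹;q)_k (qτ⁻¹z;q)_{n-k} / ((q;q)_k (q;q)_{n-k})] · z^{2k-n}. -/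

import Mathlib

/-- The finite q-Pochhammer symbol `(a;Q)_n = ∏_{j=0}^{n-1} (1 - a Q^j)`. -/
def qPoch (a Q : ℂ) (n : ℕ) : ℂ := ∏ j ∈ Finset.range n, (1 - a * Q ^ j)

lemma qPoch_zero (a Q : ℂ) : qPoch a Q 0 = 1 := Finset.prod_range_zero _

lemma qPoch_succ (a Q : ℂ) (n : ℕ) :
    qPoch a Q (n + 1) = qPoch a Q n * (1 - a * Q ^ n) := Finset.prod_range_succ _ _

noncomputable def Tm (a b Q : ℂ) (k m : ℕ) : ℂ :=
  qPoch a Q k * qPoch b Q m / (qPoch Q Q k * qPoch Q Q m)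

noncomputable def Hs (a b Q z : ℂ) (n : ℕ) : ℂ :=
  ∑ j ∈ Finset.range (n + 1), Tm a b Q j (n - j) * z ^ (2 * j)

lemma qPochQ_ne (Q : ℂ) (hQ : ∀ j : ℕ, (1 : ℂ) - Q * Q ^ j ≠ 0) (n : ℕ) :
    qPoch Q Q n ≠ 0 := by
  unfold qPoch
  exact Finset.prod_ne_zero_iff.2 fun j _ => hQ j

lemma myInterior (a b Q : ℂ) (hab : a * b = Q ^ 2)
    (hQ : ∀ j : ℕ, (1 : ℂ) - Q * Q ^ j ≠ 0) (k m : ℕ) :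
    (1 - Q ^ (k + m + 2)) * (Tm a b Q (k + 1) (m + 1) + Tm a b Q k m)
      = (1 - a * Q ^ (k + m + 1)) * Tm a b Q k (m + 1)
        + (1 - b * Q ^ (k + m + 1)) * Tm a b Q (k + 1) m := by
  have hck := qPochQ_ne Q hQ k
  have hcm := qPochQ_ne Q hQ m
  have hk := hQ k
  have hm := hQ m
  have e1 : Tm a b Q (k + 1) (m + 1)
      = Tm a b Q k m * ((1 - a * Q ^ k) * (1 - b * Q ^ m))
        / ((1 - Q * Q ^ k) * (1 - Q * Q ^ m)) := by
    unfold Tm; rw [qPoch_succ, qPoch_succ, qPoch_succ, qPoch_succ]; field_simp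
  have e2 : Tm a b Q k (m + 1) = Tm a b Q k m * (1 - b * Q ^ m) / (1 - Q * Q ^ m) := by
    unfold Tm; rw [qPoch_succ, qPoch_succ]; field_simp
  have e3 : Tm a b Q (k + 1) m = Tm a b Q k m * (1 - a * Q ^ k) / (1 - Q * Q ^ k) := by
    unfold Tm; rw [qPoch_succ, qPoch_succ]; field_simp
  rw [e1, e2, e3]
  have hk' : 1 - Q ^ k * Q ≠ 0 := by rw [mul_comm]; exact hk
  have hm' : 1 - Q ^ m * Q ≠ 0 := by rw [mul_comm]; exact hm
  field_simp
  linear_combination (Tm a b Q k m * Q ^ k * Q ^ m * (1 - Q * Q ^ k) * (1 - Q * Q ^ m)) * hab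

lemma myEdgeL (a b Q : ℂ) (hQ : ∀ j : ℕ, (1 : ℂ) - Q * Q ^ j ≠ 0) (m : ℕ) :
    (1 - Q ^ (m + 1)) * Tm a b Q 0 (m + 1) = (1 - b * Q ^ m) * Tm a b Q 0 m := by
  have hcm := qPochQ_ne Q hQ m
  have hm := hQ m
  unfold Tm
  simp only [qPoch_succ, qPoch_zero, one_mul, mul_one, pow_succ']
  field_simp

lemma myEdgeR (a b Q : ℂ) (hQ : ∀ j : ℕ, (1 : ℂ) - Q * Q ^ j ≠ 0) (k : ℕ) :
    (1 - Q ^ (k + 1)) * Tm a b Q (k + 1) 0 = (1 - a * Q ^ k) * Tm a b Q k 0 := by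
  have hck := qPochQ_ne Q hQ k
  have hk := hQ k
  unfold Tm
  simp only [qPoch_succ, qPoch_zero, one_mul, mul_one, pow_succ']
  field_simp

lemma myKey (a b Q z : ℂ) (hab : a * b = Q ^ 2)
    (hQ : ∀ j : ℕ, (1 : ℂ) - Q * Q ^ j ≠ 0) (n : ℕ) :
    (1 - Q ^ (n + 2)) * (Hs a b Q z (n + 2) + z ^ 2 * Hs a b Q z n)
      = ((1 - a * Q ^ (n + 1)) * z ^ 2 + (1 - b * Q ^ (n + 1))) * Hs a b Q z (n + 1) := by
  have hA : Hs a b Q z (n + 2)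
      = (∑ j ∈ Finset.range (n + 1), Tm a b Q (j + 1) (n + 1 - j) * z ^ (2 * (j + 1)))
        + Tm a b Q 0 (n + 2) * z ^ (2 * 0) + Tm a b Q (n + 2) 0 * z ^ (2 * (n + 2)) := by
    unfold Hs
    rw [Finset.sum_range_succ, Finset.sum_range_succ']
    simp only [Nat.succ_sub_succ, Nat.sub_zero, Nat.sub_self]
  have hB : Hs a b Q z n = ∑ j ∈ Finset.range (n + 1), Tm a b Q j (n - j) * z ^ (2 * j) := rfl
  have hC : Hs a b Q z (n + 1)
      = (∑ j ∈ Finset.range (n + 1), Tm a b Q j (n + 1 - j) * z ^ (2 * j))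
        + Tm a b Q (n + 1) 0 * z ^ (2 * (n + 1)) := by
    unfold Hs
    rw [Finset.sum_range_succ]
    simp only [Nat.sub_self]
  have hD : Hs a b Q z (n + 1)
      = (∑ j ∈ Finset.range (n + 1), Tm a b Q (j + 1) (n - j) * z ^ (2 * (j + 1)))
        + Tm a b Q 0 (n + 1) * z ^ (2 * 0) := by
    unfold Hs
    rw [Finset.sum_range_succ']
    simp only [Nat.succ_sub_succ, Nat.sub_zero]
  have hS : (1 - Q ^ (n + 2)) * (∑ j ∈ Finset.range (n + 1), Tm a b Q (j + 1) (n + 1 - j) * z ^ (2 * (j + 1)))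
        + (1 - Q ^ (n + 2)) * z ^ 2 * (∑ j ∈ Finset.range (n + 1), Tm a b Q j (n - j) * z ^ (2 * j))
      = (1 - a * Q ^ (n + 1)) * z ^ 2 * (∑ j ∈ Finset.range (n + 1), Tm a b Q j (n + 1 - j) * z ^ (2 * j))
        + (1 - b * Q ^ (n + 1)) * (∑ j ∈ Finset.range (n + 1), Tm a b Q (j + 1) (n - j) * z ^ (2 * (j + 1))) := by
    rw [Finset.mul_sum, Finset.mul_sum, Finset.mul_sum, Finset.mul_sum,
      ← Finset.sum_add_distrib, ← Finset.sum_add_distrib]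
    refine Finset.sum_congr rfl fun j hj => ?_
    have hjn : j ≤ n := Finset.mem_range_succ_iff.mp hj
    have h1 : n + 1 - j = (n - j) + 1 := by omega
    have h2 : n + 2 = j + (n - j) + 2 := by omega
    have h3 : n + 1 = j + (n - j) + 1 := by omega
    rw [h1, h2, h3]
    linear_combination (z ^ (2 * j + 2)) * myInterior a b Q hab hQ j (n - j)
  have hE0 : (1 - Q ^ (n + 2)) * (Tm a b Q 0 (n + 2) * z ^ (2 * 0))
      = (1 - b * Q ^ (n + 1)) * (Tm a b Q 0 (n + 1) * z ^ (2 * 0)) := by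
    linear_combination (z ^ (2 * 0)) * myEdgeL a b Q hQ (n + 1)
  have hEt : (1 - Q ^ (n + 2)) * (Tm a b Q (n + 2) 0 * z ^ (2 * (n + 2)))
      = (1 - a * Q ^ (n + 1)) * z ^ 2 * (Tm a b Q (n + 1) 0 * z ^ (2 * (n + 1))) := by
    linear_combination (z ^ (2 * (n + 1) + 2)) * myEdgeR a b Q hQ (n + 1)
  linear_combination (1 - Q ^ (n + 2)) * hA + ((1 - Q ^ (n + 2)) * z ^ 2) * hB
    - ((1 - a * Q ^ (n + 1)) * z ^ 2) * hC - (1 - b * Q ^ (n + 1)) * hD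
    + hS + hE0 + hEt

noncomputable def Ks (a b Q z : ℂ) (n : ℕ) : ℂ := z ^ (-(n : ℤ)) * Hs a b Q z n

lemma myCs (Q β' : ℂ) (n : ℕ) :
    qPoch Q Q (n + 1) / qPoch β' Q (n + 1)
      = (qPoch Q Q n / qPoch β' Q n) * ((1 - Q ^ (n + 1)) / (1 - β' * Q ^ n)) := by
  simp only [qPoch_succ, pow_succ']
  rw [div_mul_div_comm]

lemma myRed (a b Q z β' : ℂ) (hz : z ≠ 0) (hab : a * b = Q ^ 2)
    (hQ : ∀ j : ℕ, (1 : ℂ) - Q * Q ^ j ≠ 0)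
    (hxz : a * z ^ 2 + b = β' * (z ^ 2 + 1)) (n : ℕ) :
    (1 - β' * Q ^ (n + 1)) * ((z + z⁻¹) * z⁻¹ * Hs a b Q z (n + 1))
      = (1 - Q ^ (n + 2)) * (z⁻¹ * z⁻¹ * Hs a b Q z (n + 2) + Hs a b Q z n) := by
  have k := myKey a b Q z hab hQ n
  field_simp
  linear_combination -k + (Q ^ (n + 1) * Hs a b Q z (n + 1)) * hxz

lemma myE4 (a b Q z β' : ℂ) (hz : z ≠ 0) (hab : a * b = Q ^ 2)
    (hQ : ∀ j : ℕ, (1 : ℂ) - Q * Q ^ j ≠ 0)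
    (hβn : ∀ j : ℕ, (1 : ℂ) - β' * Q ^ j ≠ 0)
    (hxz : a * z ^ 2 + b = β' * (z ^ 2 + 1)) (n : ℕ) :
    (z + z⁻¹) * Ks a b Q z (n + 1)
      = ((1 - Q ^ (n + 2)) / (1 - β' * Q ^ (n + 1))) * (Ks a b Q z (n + 2) + Ks a b Q z n) := by
  have red := myRed a b Q z β' hz hab hQ hxz n
  have p1 : z ^ (-((n + 1 : ℕ) : ℤ)) = z⁻¹ * z ^ (-((n : ℕ) : ℤ)) := by
    rw [show -((n + 1 : ℕ) : ℤ) = (-1) + -((n : ℕ) : ℤ) by push_cast; ring,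
      zpow_add₀ hz, zpow_neg_one]
  have p2 : z ^ (-((n + 2 : ℕ) : ℤ)) = z⁻¹ * (z⁻¹ * z ^ (-((n : ℕ) : ℤ))) := by
    rw [show -((n + 2 : ℕ) : ℤ) = (-1) + ((-1) + -((n : ℕ) : ℤ)) by push_cast; ring,
      zpow_add₀ hz, zpow_add₀ hz, zpow_neg_one]
  rw [div_mul_eq_mul_div, eq_div_iff (hβn (n + 1))]
  unfold Ks
  rw [p1, p2]
  linear_combination (z ^ (-((n : ℕ) : ℤ))) * red

theorem stmt_12 (q β : ℝ) (hq : q ∈ Set.Ioo (0 : ℝ) 1) (hβ : β < 1)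
    (z τ : ℂ) (hz0 : 0 < ‖z‖) (hz1 : ‖z‖ < 1) (hτ : τ ≠ 0)
    (hrel : (q : ℂ) * (τ + τ⁻¹) = (β : ℂ) * (z + z⁻¹))
    (p : ℕ → ℂ → ℂ)
    (hp0 : ∀ x, p 0 x = 1) (hp1 : ∀ x, p 1 x = x)
    (hprec : ∀ n : ℕ, 1 ≤ n → ∀ x : ℂ,
      p (n + 1) x = x * p n x -
        ((1 - (q : ℂ) ^ n) / (1 - (β : ℂ) * (q : ℂ) ^ (n - 1))) *
        ((1 - (q : ℂ) ^ (n + 1)) / (1 - (β : ℂ) * (q : ℂ) ^ n)) * p (n - 1) x) :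
    ∀ n : ℕ, p n (z + z⁻¹) =
      (qPoch (q : ℂ) (q : ℂ) n / qPoch (β : ℂ) (q : ℂ) n) *
        ∑ k ∈ Finset.range (n + 1),
          qPoch ((q : ℂ) * τ * z⁻¹) (q : ℂ) k * qPoch ((q : ℂ) * τ⁻¹ * z) (q : ℂ) (n - k) /
            (qPoch (q : ℂ) (q : ℂ) k * qPoch (q : ℂ) (q : ℂ) (n - k)) *
          z ^ (2 * (k : ℤ) - (n : ℤ)) := by
  set Q : ℂ := (q : ℂ) with hQdef
  set β' : ℂ := (β : ℂ) with hβdef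
  obtain ⟨a, hadef⟩ : ∃ a : ℂ, a = Q * τ * z⁻¹ := ⟨_, rfl⟩
  obtain ⟨b, hbdef⟩ : ∃ b : ℂ, b = Q * τ⁻¹ * z := ⟨_, rfl⟩
  have hz : z ≠ 0 := norm_pos_iff.mp hz0
  have hq0 : (0:ℝ) < q := hq.1
  have hq1 : q < 1 := hq.2
  have hQ0 : Q ≠ 0 := by
    simp only [hQdef, ne_eq, Complex.ofReal_eq_zero]; exact ne_of_gt hq0
  have hQ : ∀ j : ℕ, (1 : ℂ) - Q * Q ^ j ≠ 0 := by
    intro j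
    have h1 : (0:ℝ) < 1 - q * q ^ j := by
      nlinarith [pow_pos hq0 j, pow_le_one₀ (le_of_lt hq0) (le_of_lt hq1) (n := j)]
    have h2 : ((1 - q * q ^ j : ℝ) : ℂ) ≠ 0 := by
      exact_mod_cast ne_of_gt h1
    simpa [hQdef] using h2
  have hβn : ∀ j : ℕ, (1 : ℂ) - β' * Q ^ j ≠ 0 := by
    intro j
    have h1 : (0:ℝ) < 1 - β * q ^ j := by
      nlinarith [pow_pos hq0 j, pow_le_one₀ (le_of_lt hq0) (le_of_lt hq1) (n := j),
        mul_pos (pow_pos hq0 j) (sub_pos.2 hβ)]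
    have h2 : ((1 - β * q ^ j : ℝ) : ℂ) ≠ 0 := by
      exact_mod_cast ne_of_gt h1
    simpa [hQdef, hβdef] using h2
  have hab : a * b = Q ^ 2 := by
    rw [hadef, hbdef]
    field_simp
  have hxz : a * z ^ 2 + b = β' * (z ^ 2 + 1) := by
    rw [hadef, hbdef]
    have h := hrel
    field_simp at h ⊢
    linear_combination h
  have hSum : ∀ n : ℕ,
      (∑ k ∈ Finset.range (n + 1),
        qPoch a Q k * qPoch b Q (n - k) / (qPoch Q Q k * qPoch Q Q (n - k)) *
          z ^ (2 * (k : ℤ) - (n : ℤ))) = Ks a b Q z n := by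
    intro n
    unfold Ks Hs
    rw [Finset.mul_sum]
    refine Finset.sum_congr rfl fun k hk => ?_
    rw [show (2 * (k : ℤ) - (n : ℤ)) = -((n : ℕ) : ℤ) + ((2 * k : ℕ) : ℤ) by push_cast; ring,
      zpow_add₀ hz, zpow_natCast]
    unfold Tm
    ring
  have hxz' : Q * z * (τ * τ + 1) = β' * (z ^ 2 + 1) * τ := by
    have h := hrel
    field_simp at h
    linear_combination h
  have main : ∀ n : ℕ,
      p n (z + z⁻¹) = (qPoch Q Q n / qPoch β' Q n) * Ks a b Q z n ∧
      p (n + 1) (z + z⁻¹) = (qPoch Q Q (n + 1) / qPoch β' Q (n + 1)) * Ks a b Q z (n + 1) := by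
    intro n
    induction n with
    | zero =>
      constructor
      · rw [hp0]
        unfold Ks Hs Tm
        simp [qPoch_zero]
      · rw [hp1]
        unfold Ks Hs Tm
        simp only [Finset.sum_range_succ, Finset.sum_range_zero, qPoch_succ, qPoch_zero,
          Nat.sub_zero, Nat.sub_self, pow_zero, mul_one, one_mul, zero_add]
        rw [show -((1 : ℕ) : ℤ) = (-1 : ℤ) by norm_num, zpow_neg_one]
        have h10 := hQ 0
        have h20 := hβn 0
        rw [pow_zero, mul_one] at h10 h20
        field_simp
        linear_combination hxz
      | succ n ih =>
      refine ⟨ih.2, ?_⟩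
      have hrec := hprec (n + 1) (by omega) (z + z⁻¹)
      simp only [Nat.add_sub_cancel] at hrec
      have E4 := myE4 a b Q z β' hz hab hQ hβn hxz n
      have E5 := myCs Q β' n
      have E6 := myCs Q β' (n + 1)
      linear_combination hrec + (z + z⁻¹) * ih.2
        - (((1 - Q ^ (n + 1)) / (1 - β' * Q ^ n)) * ((1 - Q ^ (n + 1 + 1)) / (1 - β' * Q ^ (n + 1)))) * ih.1
        + (qPoch Q Q (n + 1) / qPoch β' Q (n + 1)) * E4
        + (((1 - Q ^ (n + 2)) / (1 - β' * Q ^ (n + 1))) * Ks a b Q z n) * E5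
        - (Ks a b Q z (n + 2)) * E6
  intro n
  rw [← hadef, ← hbdef, hSum n]
  exact (main n).1
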